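/- arXiv:1102.0690 — 4 statements merged into one kernel-verified Lean document; each statement's English description precedes it below -/
import Mathlib

section
/- For every real t ≥ 1 and every real r with 0 ≤ r < 1, one has (t − r)/(1 − r²) ≥ (t + √(t² − 1))/2. -/
theorem stmt_1 (t r : ℝ) (ht : 1 ≤ t) (hr0 : 0 ≤ r) (hr1 : r < 1) :
    (t - r) / (1 - r ^ 2) ≥ (t + Real.sqrt (t ^ 2 - 1)) / 2 := by
  set s := Real.sqrt (t ^ 2 - 1) with hs
  have hs0 : 0 ≤ s := Real.sqrt_nonneg _
  have hs2 : s ^ 2 = t ^ 2 - 1 := Real.sq_sqrt (by nlinarith)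
  have hden : 0 < 1 - r ^ 2 := by nlinarith
  rw [ge_iff_le, div_le_div_iff₀ (by norm_num) hden]
  nlinarith [mul_nonneg (by nlinarith : (0:ℝ) ≤ t + s) (sq_nonneg (r - (t - s)))]
end

section
/- Let c1, c2 be vectors in ℂ^n with ⟨c1,c2⟩ ≠ 0, let s := |⟨c1,c2⟩|, and let t := ((1+‖c1‖²)(1+‖c2‖²) − s² − 1)/(2s). Then for every complex number ρ with |ρ| < 1, (1 + ‖c1‖² − |⟨c1,c2⟩ + ρ|²/(1 + ‖c2‖²))/(1 − |ρ|²) ≥ (1 + s·(t + √(t² − 1)))/(1 + ‖c2‖²). -/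
theorem stmt_5 (n : ℕ) (c1 c2 : EuclideanSpace ℂ (Fin n))
    (h : (inner ℂ c1 c2 : ℂ) ≠ 0)
    (s : ℝ) (hs : s = ‖(inner ℂ c1 c2 : ℂ)‖)
    (t : ℝ) (ht : t = ((1 + ‖c1‖ ^ 2) * (1 + ‖c2‖ ^ 2) - s ^ 2 - 1) / (2 * s))
    (ρ : ℂ) (hρ : ‖ρ‖ < 1) :
    (1 + ‖c1‖ ^ 2 - ‖(inner ℂ c1 c2 : ℂ) + ρ‖ ^ 2 / (1 + ‖c2‖ ^ 2)) / (1 - ‖ρ‖ ^ 2) ≥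
      (1 + s * (t + Real.sqrt (t ^ 2 - 1))) / (1 + ‖c2‖ ^ 2) := by
  set r := ‖ρ‖ with hr
  have hr0 : 0 ≤ r := norm_nonneg _
  have hspos : 0 < s := by rw [hs]; exact norm_pos_iff.mpr h
  have hb : (0:ℝ) < 1 + ‖c2‖ ^ 2 := by positivity
  have hr2 : (0:ℝ) < 1 - r ^ 2 := by nlinarith
  have hab : s ≤ ‖c1‖ * ‖c2‖ := by rw [hs]; exact norm_inner_le_norm c1 c2
  have ht1 : 1 ≤ t := by
    rw [ht, le_div_iff₀ (by positivity)]
    nlinarith [sq_nonneg (‖c1‖ - ‖c2‖), sq_nonneg (‖c1‖*‖c2‖ - s),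
      mul_nonneg (norm_nonneg c1) (norm_nonneg c2)]
  set u := t + Real.sqrt (t ^ 2 - 1) with hu
  have hts : Real.sqrt (t ^ 2 - 1) ^ 2 = t ^ 2 - 1 := Real.sq_sqrt (by nlinarith)
  have hu1 : 1 ≤ u := by
    have := Real.sqrt_nonneg (t ^ 2 - 1); rw [hu]; linarith
  have hueq : u ^ 2 - 2 * t * u + 1 = 0 := by
    rw [hu]; nlinarith [hts]
  have h2t : 2 * s * t = (1 + ‖c1‖ ^ 2) * (1 + ‖c2‖ ^ 2) - s ^ 2 - 1 := by
    rw [ht]; field_simp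
  have hnorm : ‖(inner ℂ c1 c2 : ℂ) + ρ‖ ^ 2 ≤ (s + r) ^ 2 := by
    have h1 : ‖(inner ℂ c1 c2 : ℂ) + ρ‖ ≤ s + r := by
      rw [hs]; exact norm_add_le _ _
    nlinarith [norm_nonneg ((inner ℂ c1 c2 : ℂ) + ρ)]
  have key : (1 + s * u) * (1 - r ^ 2) ≤
      (1 + ‖c1‖ ^ 2) * (1 + ‖c2‖ ^ 2) - (s + r) ^ 2 := by
    nlinarith [mul_nonneg hspos.le (sq_nonneg (u * r - 1)), hueq, hu1, hspos, h2t,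
      mul_pos hspos (lt_of_lt_of_le one_pos hu1)]
  rw [ge_iff_le, div_le_div_iff₀ hb hr2]
  have hrhs : (1 + ‖c1‖ ^ 2 - ‖(inner ℂ c1 c2 : ℂ) + ρ‖ ^ 2 / (1 + ‖c2‖ ^ 2)) *
      (1 + ‖c2‖ ^ 2) =
      (1 + ‖c1‖ ^ 2) * (1 + ‖c2‖ ^ 2) - ‖(inner ℂ c1 c2 : ℂ) + ρ‖ ^ 2 := by
    field_simp
  rw [hrhs]
  linarith [key, hnorm]
end

section
/- Let c1, c2 be vectors in ℂ^n with ⟨c1,c2⟩ ≠ 0, let s := |⟨c1,c2⟩|, and let t := ((1+‖c1‖²)(1+‖c2‖²) − s² − 1)/(2s). Assume t > 1, and set ρ_opt := (t − √(t² − 1))·⟨c1,c2⟩/|⟨c1,c2⟩|. Then |ρ_opt| < 1 and (1 + ‖c1‖² − |⟨c1,c2⟩ + ρ_opt|²/(1 + ‖c2‖²))/(1 − |ρ_opt|²) = (1 + s·(t + √(t² − 1)))/(1 + ‖c2‖²). -/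
theorem stmt_6 (n : ℕ) (c1 c2 : EuclideanSpace ℂ (Fin n))
    (h : (inner ℂ c1 c2 : ℂ) ≠ 0)
    (s : ℝ) (hs : s = ‖(inner ℂ c1 c2 : ℂ)‖)
    (t : ℝ) (ht : t = ((1 + ‖c1‖ ^ 2) * (1 + ‖c2‖ ^ 2) - s ^ 2 - 1) / (2 * s))
    (ht1 : 1 < t)
    (ρopt : ℂ)
    (hρopt : ρopt = ((t - Real.sqrt (t ^ 2 - 1)) : ℂ) *
      (inner ℂ c1 c2 : ℂ) / (‖(inner ℂ c1 c2 : ℂ)‖ : ℂ)) :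
    ‖ρopt‖ < 1 ∧
    (1 + ‖c1‖ ^ 2 - ‖(inner ℂ c1 c2 : ℂ) + ρopt‖ ^ 2 / (1 + ‖c2‖ ^ 2)) / (1 - ‖ρopt‖ ^ 2) =
      (1 + s * (t + Real.sqrt (t ^ 2 - 1))) / (1 + ‖c2‖ ^ 2) := by
  set z : ℂ := (inner ℂ c1 c2 : ℂ) with hz
  have hz0 : ‖z‖ ≠ 0 := norm_ne_zero_iff.mpr h
  have hzpos : 0 < ‖z‖ := norm_pos_iff.mpr h
  have hs0 : 0 < s := hs ▸ hzpos
  set u := Real.sqrt (t ^ 2 - 1) with hu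
  have ht0 : (0:ℝ) ≤ t ^ 2 - 1 := by nlinarith
  have hu2 : u ^ 2 = t ^ 2 - 1 := Real.sq_sqrt ht0
  have hu0 : 0 ≤ u := Real.sqrt_nonneg _
  have hut : u < t := by nlinarith
  have hut2 : t - 1 < u := by nlinarith
  have hρn : ‖ρopt‖ = t - u := by
    rw [hρopt, ← Complex.ofReal_sub, norm_div, norm_mul, Complex.norm_real,
      Complex.norm_real, Real.norm_eq_abs, Real.norm_eq_abs, abs_of_pos hzpos,
      abs_of_pos (by linarith : (0:ℝ) < t - u), mul_div_assoc, div_self hz0, mul_one]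
  have hzC : (‖z‖ : ℂ) ≠ 0 := by exact_mod_cast hz0
  have hsum : ‖z + ρopt‖ = ‖z‖ + (t - u) := by
    have heq : z + ρopt = ((1 + (t - u) / ‖z‖ : ℝ) : ℂ) * z := by
      rw [hρopt]
      push_cast
      field_simp
    have hpos : (0:ℝ) < 1 + (t - u) / ‖z‖ := by
      have : 0 < (t - u) / ‖z‖ := div_pos (by linarith) hzpos
      linarith
    rw [heq, norm_mul, Complex.norm_real, Real.norm_eq_abs, abs_of_pos hpos]
    rw [add_mul, one_mul, div_mul_cancel₀ _ hz0]
  constructor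
  · rw [hρn]; linarith
  · rw [hρn, hsum, ← hs]
    have hB : (0:ℝ) < 1 + ‖c2‖ ^ 2 := by positivity
    have hBne : (1 + ‖c2‖ ^ 2) ≠ 0 := hB.ne'
    have hAB : (1 + ‖c1‖ ^ 2) * (1 + ‖c2‖ ^ 2) = 2 * s * t + s ^ 2 + 1 := by
      field_simp at ht
      linarith
    have key : (1 + ‖c1‖ ^ 2) * (1 + ‖c2‖ ^ 2) - (s + (t - u)) ^ 2 =
        (1 + s * (t + u)) * (1 - (t - u) ^ 2) := by
      linear_combination hAB - s * (t - u) * hu2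
    have hr1 : (1 : ℝ) - (t - u) ^ 2 ≠ 0 := by nlinarith
    field_simp
    linear_combination key
end

section
/- Let c1, c2 be vectors in ℂ^n with ⟨c1,c2⟩ ≠ 0, let s := |⟨c1,c2⟩|, and let t := ((1+‖c1‖²)(1+‖c2‖²) − s² − 1)/(2s). Assume t > 1. Then the set { (1 + ‖c1‖² − |⟨c1,c2⟩ + ρ|²/(1 + ‖c2‖²))/(1 − |ρ|²) : ρ ∈ ℂ, |ρ| < 1 } has least element (1 + s·(t + √(t² − 1)))/(1 + ‖c2‖²). -/
theorem stmt_7 (n : ℕ) (c1 c2 : EuclideanSpace ℂ (Fin n))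
    (h : (inner ℂ c1 c2 : ℂ) ≠ 0)
    (s : ℝ) (hs : s = ‖(inner ℂ c1 c2 : ℂ)‖)
    (t : ℝ) (ht : t = ((1 + ‖c1‖ ^ 2) * (1 + ‖c2‖ ^ 2) - s ^ 2 - 1) / (2 * s))
    (ht1 : 1 < t) :
    IsLeast
      { x : ℝ | ∃ ρ : ℂ, ‖ρ‖ < 1 ∧
        x = (1 + ‖c1‖ ^ 2 - ‖(inner ℂ c1 c2 : ℂ) + ρ‖ ^ 2 / (1 + ‖c2‖ ^ 2)) / (1 - ‖ρ‖ ^ 2) }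
      ((1 + s * (t + Real.sqrt (t ^ 2 - 1))) / (1 + ‖c2‖ ^ 2)) := by
  set w : ℂ := (inner ℂ c1 c2 : ℂ) with hw
  have hs0 : 0 < s := by rw [hs]; exact norm_pos_iff.mpr h
  have hb0 : (0:ℝ) < 1 + ‖c2‖ ^ 2 := by positivity
  set q : ℝ := Real.sqrt (t ^ 2 - 1) with hqdef
  have hq0 : 0 ≤ q := Real.sqrt_nonneg _
  have hq2 : q ^ 2 = t ^ 2 - 1 := Real.sq_sqrt (by nlinarith)
  have hqt : q < t := by
    rw [hqdef]
    exact (Real.sqrt_lt' (by linarith)).mpr (by nlinarith)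
  have hab : (1 + ‖c1‖ ^ 2) * (1 + ‖c2‖ ^ 2) = 2 * s * t + s ^ 2 + 1 := by
    field_simp at ht
    linarith
  have hr0 : 0 < t - q := by linarith
  have hru : (t - q) * (t + q) = 1 := by linear_combination -hq2
  have hr1 : t - q < 1 := by nlinarith
  have hsC : (s : ℂ) ≠ 0 := by exact_mod_cast hs0.ne'
  constructor
  · refine ⟨(((t - q) / s : ℝ) : ℂ) * w, ?_, ?_⟩
    · rw [norm_mul, Complex.norm_real, Real.norm_eq_abs,
        abs_of_pos (by positivity), ← hs, div_mul_cancel₀ _ (ne_of_gt hs0)]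
      exact hr1
    · have h1 : w + (((t - q) / s : ℝ) : ℂ) * w = (((s + (t - q)) / s : ℝ) : ℂ) * w := by
        push_cast
        field_simp
      have h2 : ‖w + (((t - q) / s : ℝ) : ℂ) * w‖ = s + (t - q) := by
        rw [h1, norm_mul, Complex.norm_real, Real.norm_eq_abs,
          abs_of_pos (by positivity), ← hs, div_mul_cancel₀ _ (ne_of_gt hs0)]
      have h3 : ‖(((t - q) / s : ℝ) : ℂ) * w‖ = t - q := by
        rw [norm_mul, Complex.norm_real, Real.norm_eq_abs,
          abs_of_pos (by positivity), ← hs, div_mul_cancel₀ _ (ne_of_gt hs0)]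
      rw [h2, h3]
      have h1r : (0:ℝ) < 1 - (t - q) ^ 2 := by nlinarith
      rw [div_eq_div_iff hb0.ne' h1r.ne']
      have hXb : (1 + ‖c1‖ ^ 2 - (s + (t - q)) ^ 2 / (1 + ‖c2‖ ^ 2)) * (1 + ‖c2‖ ^ 2)
          = (1 + ‖c1‖ ^ 2) * (1 + ‖c2‖ ^ 2) - (s + (t - q)) ^ 2 := by
        field_simp
      rw [eq_comm, hXb]
      linear_combination hab - s * (t - q) * hq2
  · rintro x ⟨ρ, hρ, rfl⟩
    have hrρ : 0 ≤ ‖ρ‖ := norm_nonneg _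
    have h1r : 0 < 1 - ‖ρ‖ ^ 2 := by nlinarith
    have htri : ‖w + ρ‖ ≤ s + ‖ρ‖ := by
      calc ‖w + ρ‖ ≤ ‖w‖ + ‖ρ‖ := norm_add_le _ _
        _ = s + ‖ρ‖ := by rw [hs]
    have hN : ‖w + ρ‖ ^ 2 ≤ (s + ‖ρ‖) ^ 2 := by nlinarith [norm_nonneg (w + ρ)]
    rw [div_le_div_iff₀ hb0 h1r]
    have hu0 : (0:ℝ) < t + q := by linarith
    have key : ((1 + ‖c1‖ ^ 2) * (1 + ‖c2‖ ^ 2) - (s + ‖ρ‖) ^ 2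
        - (1 + s * (t + q)) * (1 - ‖ρ‖ ^ 2)) * (t + q) = s * ((t + q) * ‖ρ‖ - 1) ^ 2 := by
      linear_combination (t + q) * hab - s * hq2
    have hD : 0 ≤ (1 + ‖c1‖ ^ 2) * (1 + ‖c2‖ ^ 2) - (s + ‖ρ‖) ^ 2
        - (1 + s * (t + q)) * (1 - ‖ρ‖ ^ 2) := by
      have h1 : 0 ≤ s * ((t + q) * ‖ρ‖ - 1) ^ 2 := by positivity
      nlinarith [key]
    have hX : (1 + ‖c1‖ ^ 2 - ‖w + ρ‖ ^ 2 / (1 + ‖c2‖ ^ 2)) * (1 + ‖c2‖ ^ 2)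
        = (1 + ‖c1‖ ^ 2) * (1 + ‖c2‖ ^ 2) - ‖w + ρ‖ ^ 2 := by
      field_simp
    rw [hX]
    linarith [hD, hN]
end
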